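/- Let M be a monoid, (I, τ) a topological space, and θ a family of congruences on M indexed by I, with F carrying the topology generated by the sets [a](U) for a ∈ M and U ∈ τ. If τ is an S-topology for θ, then for every a ∈ M the map [a] : I → F defined by [a](i) = (i, ⟦a⟧_i) is a continuous section of f. -/

import Mathlib

open Topology

/-- The topology on `F = Σ i, M/θ i` generated by the subbasis of sets
`[m](U) = {(i, ⟦m⟧ᵢ) : i ∈ U}` for `m ∈ M` and `U` open in `τ`. -/
def etaleTop {M I : Type*} [Monoid M] (θ : I → Con M) (τ : TopologicalSpace I) :
    TopologicalSpace ((i : I) × (θ i).Quotient) :=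
  TopologicalSpace.generateFrom
    {V | ∃ (m : M) (U : Set I), τ.IsOpen U ∧
      V = (fun i => (⟨i, (↑m : (θ i).Quotient)⟩ : (i : I) × (θ i).Quotient)) '' U}

/-- `τ` is an S-topology for the family of congruences `θ` if whenever `(a,b) ∈ θ i`
there is a `τ`-open set `U ∋ i` with `(a,b) ∈ θ j` for all `j ∈ U`. -/
def IsSTopology {M I : Type*} [Monoid M] (θ : I → Con M) (τ : TopologicalSpace I) : Prop :=
  ∀ (a b : M) (i : I), θ i a b → ∃ U : Set I, τ.IsOpen U ∧ i ∈ U ∧ ∀ j ∈ U, θ j a b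

/-- Let `M` be a monoid, `(I, τ)` a topological space, `θ` a family of
congruences on `M`, with `F = Σ i, M/θ i` carrying the generated topology. If `τ` is an
S-topology for `θ`, then for every `a ∈ M` the map `[a] : i ↦ (i, ⟦a⟧ᵢ)` is a continuous
section of `Sigma.fst : F → I`. -/
theorem stmt7 {M I : Type*} [Monoid M] (θ : I → Con M) (τ : TopologicalSpace I)
    (hS : IsSTopology θ τ) (a : M) :
    Continuous[τ, etaleTop θ τ]
        (fun i => (⟨i, (↑a : (θ i).Quotient)⟩ : (i : I) × (θ i).Quotient)) ∧
      ∀ i : I,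
        Sigma.fst (⟨i, (↑a : (θ i).Quotient)⟩ : (i : I) × (θ i).Quotient) = i := by
  refine ⟨?_, fun i => rfl⟩
  rw [etaleTop, continuous_generateFrom_iff]
  rintro V ⟨m, U, hU, rfl⟩
  -- the preimage is {i ∈ U | ⟦m⟧ᵢ = ⟦a⟧ᵢ}, open by S-topology
  letI := τ
  rw [isOpen_iff_forall_mem_open]
  intro i hi
  simp only [Set.mem_preimage, Set.mem_image] at hi
  obtain ⟨j, hjU, hj⟩ := hi
  obtain rfl : j = i := congrArg Sigma.fst hj
  have h2 := (Sigma.mk.inj_iff.mp hj).2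
  have hma : θ j m a := (Con.eq _).mp (eq_of_heq h2)
  obtain ⟨W, hW, hjW, hall⟩ := hS m a j hma
  refine ⟨U ∩ W, ?_, τ.isOpen_inter _ _ hU hW, ⟨hjU, hjW⟩⟩
  rintro k ⟨hkU, hkW⟩
  exact ⟨k, hkU, congrArg (Sigma.mk k) ((Con.eq _).mpr (hall k hkW))⟩
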